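/- The assignment X ↦ τ_X := tr(id_X) descends to a group homomorphism τ : Pic(C) → Aut(S) from the Picard group of isomorphism classes of invertible objects to the automorphism group of the unit, whose image lies in the 2-torsion subgroup of Aut(S). In particular τ_{X⊗Z} = τ_X ∘ τ_Z for invertible X, Z. -/

import Mathlib

open CategoryTheory MonoidalCategory

variable {C : Type*} [Category C] [MonoidalCategory C] [SymmetricCategory C]

/-- Left dual data for `X`. -/
structure LeftDualData (X : C) where
  Y : C
  α : 𝟙_ C ⟶ Y ⊗ X
  αhat : X ⊗ Y ⟶ 𝟙_ C
  triangle₁ : (ρ_ X).inv ≫ (X ◁ α) ≫ (α_ X Y X).inv ≫ (αhat ▷ X) ≫ (λ_ X).hom = 𝟙 X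
  triangle₂ : (λ_ Y).inv ≫ (α ▷ Y) ≫ (α_ Y X Y).hom ≫ (Y ◁ αhat) ≫ (ρ_ Y).hom = 𝟙 Y

/-- The trace of `f : X ⟶ X` with respect to a left dual of `X`. -/
def trOf {X : C} (D : LeftDualData X) (f : X ⟶ X) : 𝟙_ C ⟶ 𝟙_ C :=
  D.α ≫ (D.Y ◁ f) ≫ (β_ D.Y X).hom ≫ D.αhat

namespace LeftDualData

variable {X Z : C}

lemma coev_ev (D : LeftDualData X) :
    X ◁ D.α ≫ (α_ X D.Y X).inv ≫ D.αhat ▷ X = (ρ_ X).hom ≫ (λ_ X).inv := by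
  have h := congrArg (fun f => (ρ_ X).hom ≫ f ≫ (λ_ X).inv) D.triangle₁
  simpa using h

lemma ev_coev (D : LeftDualData X) :
    D.α ▷ D.Y ≫ (α_ D.Y X D.Y).hom ≫ D.Y ◁ D.αhat = (λ_ D.Y).hom ≫ (ρ_ D.Y).inv := by
  have h := congrArg (fun f => (λ_ D.Y).hom ≫ f ≫ (ρ_ D.Y).inv) D.triangle₂
  simpa using h

lemma coev_ev'' (D : LeftDualData X) :
    X ◁ D.α ⊗≫ D.αhat ▷ X = (ρ_ X).hom ≫ (λ_ X).inv := by
  convert D.coev_ev using 2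
  simp [monoidalComp]

lemma ev_coev'' (D : LeftDualData X) :
    D.α ▷ D.Y ⊗≫ D.Y ◁ D.αhat = (λ_ D.Y).hom ≫ (ρ_ D.Y).inv := by
  convert D.ev_coev using 2
  simp [monoidalComp]

/-- Constructor from the rearranged zigzag identities. -/
def mk' (Y : C) (α : 𝟙_ C ⟶ Y ⊗ X) (αhat : X ⊗ Y ⟶ 𝟙_ C)
    (h₁ : X ◁ α ≫ (α_ X Y X).inv ≫ αhat ▷ X = (ρ_ X).hom ≫ (λ_ X).inv)
    (h₂ : α ▷ Y ≫ (α_ Y X Y).hom ≫ Y ◁ αhat = (λ_ Y).hom ≫ (ρ_ Y).inv) :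
    LeftDualData X where
  Y := Y
  α := α
  αhat := αhat
  triangle₁ := by
    have : (ρ_ X).inv ≫ (X ◁ α ≫ (α_ X Y X).inv ≫ αhat ▷ X) ≫ (λ_ X).hom = 𝟙 X := by
      rw [h₁]; simp
    simpa using this
  triangle₂ := by
    have : (λ_ Y).inv ≫ (α ▷ Y ≫ (α_ Y X Y).hom ≫ Y ◁ αhat) ≫ (ρ_ Y).hom = 𝟙 Y := by
      rw [h₂]; simp
    simpa using this

/-- The associated exact pairing. -/
def pairing (D : LeftDualData X) : ExactPairing D.Y X where
  coevaluation' := D.α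
  evaluation' := D.αhat
  coevaluation_evaluation' := D.coev_ev
  evaluation_coevaluation' := D.ev_coev

/-- Left dual data from an exact pairing. -/
def ofPairing (Y : C) [p : ExactPairing Y X] : LeftDualData X :=
  mk' Y (η_ Y X) (ε_ Y X) (ExactPairing.coevaluation_evaluation _ _)
    (ExactPairing.evaluation_coevaluation _ _)

/-- Dual data for the unit object. -/
def unitD : LeftDualData (𝟙_ C) := ofPairing (𝟙_ C)

/-- Dual data for the dual, in a symmetric category. -/
def swapD (D : LeftDualData X) : LeftDualData D.Y :=
  letI := D.pairing
  letI := BraidedCategory.exactPairing_swap D.Y X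
  ofPairing (X := D.Y) X

/-- Transport dual data along an isomorphism. -/
def congD {X' : C} (D : LeftDualData X') (i : X ≅ X') : LeftDualData X :=
  letI := D.pairing
  letI : ExactPairing D.Y X := exactPairingCongrRight i
  ofPairing (X := X) D.Y

@[simp] lemma unitD_Y : (unitD : LeftDualData (𝟙_ C)).Y = 𝟙_ C := rfl
@[simp] lemma unitD_α : (unitD : LeftDualData (𝟙_ C)).α = (ρ_ (𝟙_ C)).inv := rfl
@[simp] lemma unitD_αhat : (unitD : LeftDualData (𝟙_ C)).αhat = (ρ_ (𝟙_ C)).hom := rfl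

@[simp] lemma swapD_Y (D : LeftDualData X) : (swapD D).Y = X := rfl
@[simp] lemma swapD_α (D : LeftDualData X) :
    (swapD D).α = D.α ≫ (β_ X D.Y).inv := rfl
@[simp] lemma swapD_αhat (D : LeftDualData X) :
    (swapD D).αhat = (β_ D.Y X).hom ≫ D.αhat := rfl

@[simp] lemma congD_Y {X' : C} (D : LeftDualData X') (i : X ≅ X') : (congD D i).Y = D.Y := rfl
@[simp] lemma congD_α {X' : C} (D : LeftDualData X') (i : X ≅ X') :
    (congD D i).α = D.α ≫ D.Y ◁ i.inv := rfl
@[simp] lemma congD_αhat {X' : C} (D : LeftDualData X') (i : X ≅ X') :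
    (congD D i).αhat = i.hom ▷ D.Y ≫ D.αhat := rfl

end LeftDualData

open LeftDualData

lemma trOf_id {X : C} (D : LeftDualData X) :
    trOf D (𝟙 X) = D.α ≫ (β_ D.Y X).hom ≫ D.αhat := by
  simp [trOf]

lemma tau_unitD : trOf (unitD : LeftDualData (𝟙_ C)) (𝟙 (𝟙_ C)) = 𝟙 (𝟙_ C) := by
  simp [trOf_id, unitors_equal, unitors_inv_equal]

lemma tau_swapD {X : C} (D : LeftDualData X) :
    trOf (swapD D) (𝟙 D.Y) = trOf D (𝟙 X) := by
  simp [trOf_id, ← SymmetricCategory.braiding_swap_eq_inv_braiding]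

lemma tau_congD {X X' : C} (D : LeftDualData X') (i : X ≅ X') :
    trOf (congD D i) (𝟙 X) = trOf D (𝟙 X') := by
  simp only [trOf_id, congD_Y, congD_α, congD_αhat, Category.assoc]
  rw [← BraidedCategory.braiding_naturality_right_assoc]
  simp [← comp_whiskerRight_assoc]

/-- Scalars commute. -/
lemma scalar_comm (s t : 𝟙_ C ⟶ 𝟙_ C) : s ≫ t = t ≫ s := by
  have h := whisker_exchange (f := s) (g := t)
  simp only [id_whiskerLeft, MonoidalCategory.whiskerRight_id] at h
  rw [unitors_equal, unitors_inv_equal] at h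
  have h2 := congrArg (fun f => (ρ_ (𝟙_ C)).inv ≫ f ≫ (ρ_ (𝟙_ C)).hom) h
  simpa using h2.symm

/-- Key uniqueness: trace of the identity is independent of the chosen dual data. -/
lemma tau_unique {X : C} (D D' : LeftDualData X) :
    trOf D (𝟙 X) = trOf D' (𝟙 X) := by
  have h2 : X ◁ ((λ_ D.Y).inv ≫ D'.α ▷ D.Y ≫ (α_ D'.Y X D.Y).hom ≫ D'.Y ◁ D.αhat ≫
      (ρ_ D'.Y).hom) ≫ D'.αhat = D.αhat := by
    calc X ◁ ((λ_ D.Y).inv ≫ D'.α ▷ D.Y ≫ (α_ D'.Y X D.Y).hom ≫ D'.Y ◁ D.αhat ≫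
          (ρ_ D'.Y).hom) ≫ D'.αhat
        = 𝟙 _ ⊗≫ X ◁ D'.α ▷ D.Y ⊗≫ ((X ⊗ D'.Y) ◁ D.αhat ≫ D'.αhat ▷ 𝟙_ C) ⊗≫ 𝟙 _ := by
          monoidal
      _ = 𝟙 _ ⊗≫ X ◁ D'.α ▷ D.Y ⊗≫ (D'.αhat ▷ (X ⊗ D.Y) ≫ 𝟙_ C ◁ D.αhat) ⊗≫ 𝟙 _ := by
          rw [whisker_exchange]
      _ = 𝟙 _ ⊗≫ (X ◁ D'.α ⊗≫ D'.αhat ▷ X) ▷ D.Y ⊗≫ D.αhat ⊗≫ 𝟙 _ := by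
          monoidal
      _ = 𝟙 _ ⊗≫ ((ρ_ X).hom ≫ (λ_ X).inv) ▷ D.Y ⊗≫ D.αhat ⊗≫ 𝟙 _ := by
          rw [D'.coev_ev'']
      _ = D.αhat := by monoidal
  have h1 : D.α ≫ ((λ_ D.Y).inv ≫ D'.α ▷ D.Y ≫ (α_ D'.Y X D.Y).hom ≫ D'.Y ◁ D.αhat ≫
      (ρ_ D'.Y).hom) ▷ X = D'.α := by
    calc D.α ≫ ((λ_ D.Y).inv ≫ D'.α ▷ D.Y ≫ (α_ D'.Y X D.Y).hom ≫ D'.Y ◁ D.αhat ≫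
          (ρ_ D'.Y).hom) ▷ X
        = 𝟙 _ ⊗≫ (𝟙_ C ◁ D.α ≫ D'.α ▷ (D.Y ⊗ X)) ⊗≫ D'.Y ◁ D.αhat ▷ X ⊗≫ 𝟙 _ := by
          monoidal
      _ = 𝟙 _ ⊗≫ (D'.α ▷ 𝟙_ C ≫ (D'.Y ⊗ X) ◁ D.α) ⊗≫ D'.Y ◁ D.αhat ▷ X ⊗≫ 𝟙 _ := by
          rw [← whisker_exchange]
      _ = 𝟙 _ ⊗≫ D'.α ⊗≫ D'.Y ◁ (X ◁ D.α ⊗≫ D.αhat ▷ X) ⊗≫ 𝟙 _ := by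
          monoidal
      _ = 𝟙 _ ⊗≫ D'.α ⊗≫ D'.Y ◁ ((ρ_ X).hom ≫ (λ_ X).inv) ⊗≫ 𝟙 _ := by
          rw [D.coev_ev'']
      _ = D'.α := by monoidal
  rw [trOf_id, trOf_id, ← h2,
    ← BraidedCategory.braiding_naturality_left_assoc, ← Category.assoc, h1]

namespace LeftDualData

set_option maxHeartbeats 1600000 in
/-- Product dual data. -/
def prodD {X Z : C} (D : LeftDualData X) (E : LeftDualData Z) : LeftDualData (X ⊗ Z) :=
  mk' (E.Y ⊗ D.Y)
    (E.α ⊗≫ E.Y ◁ D.α ▷ Z ⊗≫ 𝟙 ((E.Y ⊗ D.Y) ⊗ (X ⊗ Z)))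
    (𝟙 ((X ⊗ Z) ⊗ E.Y ⊗ D.Y) ⊗≫ X ◁ E.αhat ▷ D.Y ⊗≫ D.αhat)
    (by
      calc (X ⊗ Z) ◁ (E.α ⊗≫ E.Y ◁ D.α ▷ Z ⊗≫ 𝟙 ((E.Y ⊗ D.Y) ⊗ (X ⊗ Z))) ≫
            (α_ (X ⊗ Z) (E.Y ⊗ D.Y) (X ⊗ Z)).inv ≫
            (𝟙 ((X ⊗ Z) ⊗ E.Y ⊗ D.Y) ⊗≫ X ◁ E.αhat ▷ D.Y ⊗≫ D.αhat) ▷ (X ⊗ Z)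
          = 𝟙 _ ⊗≫ X ◁ Z ◁ E.α ⊗≫
            ((X ⊗ (Z ⊗ E.Y)) ◁ (D.α ▷ Z) ≫ (X ◁ E.αhat) ▷ ((D.Y ⊗ X) ⊗ Z)) ⊗≫
            (D.αhat ▷ X) ▷ Z ⊗≫ 𝟙 _ := by monoidal
        _ = 𝟙 _ ⊗≫ X ◁ Z ◁ E.α ⊗≫
            ((X ◁ E.αhat) ▷ (𝟙_ C ⊗ Z) ≫ (X ⊗ 𝟙_ C) ◁ (D.α ▷ Z)) ⊗≫
            (D.αhat ▷ X) ▷ Z ⊗≫ 𝟙 _ := by rw [whisker_exchange]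
        _ = 𝟙 _ ⊗≫ X ◁ (Z ◁ E.α ⊗≫ E.αhat ▷ Z) ⊗≫ (X ◁ D.α ⊗≫ D.αhat ▷ X) ▷ Z ⊗≫ 𝟙 _ := by
            monoidal
        _ = 𝟙 _ ⊗≫ X ◁ ((ρ_ Z).hom ≫ (λ_ Z).inv) ⊗≫ ((ρ_ X).hom ≫ (λ_ X).inv) ▷ Z ⊗≫ 𝟙 _ := by
            rw [E.coev_ev'', D.coev_ev'']
        _ = (ρ_ (X ⊗ Z)).hom ≫ (λ_ (X ⊗ Z)).inv := by monoidal)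
    (by
      calc (E.α ⊗≫ E.Y ◁ D.α ▷ Z ⊗≫ 𝟙 ((E.Y ⊗ D.Y) ⊗ (X ⊗ Z))) ▷ (E.Y ⊗ D.Y) ≫
            (α_ (E.Y ⊗ D.Y) (X ⊗ Z) (E.Y ⊗ D.Y)).hom ≫
            (E.Y ⊗ D.Y) ◁ (𝟙 ((X ⊗ Z) ⊗ E.Y ⊗ D.Y) ⊗≫ X ◁ E.αhat ▷ D.Y ⊗≫ D.αhat)
          = 𝟙 _ ⊗≫ E.α ▷ (E.Y ⊗ D.Y) ⊗≫
            ((E.Y ◁ D.α) ▷ ((Z ⊗ E.Y) ⊗ D.Y) ≫ (E.Y ⊗ (D.Y ⊗ X)) ◁ (E.αhat ▷ D.Y)) ⊗≫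
            (E.Y ⊗ D.Y) ◁ D.αhat ⊗≫ 𝟙 _ := by monoidal
        _ = 𝟙 _ ⊗≫ E.α ▷ (E.Y ⊗ D.Y) ⊗≫
            ((E.Y ⊗ 𝟙_ C) ◁ (E.αhat ▷ D.Y) ≫ (E.Y ◁ D.α) ▷ (𝟙_ C ⊗ D.Y)) ⊗≫
            (E.Y ⊗ D.Y) ◁ D.αhat ⊗≫ 𝟙 _ := by rw [← whisker_exchange]
        _ = 𝟙 _ ⊗≫ (E.α ▷ E.Y ⊗≫ E.Y ◁ E.αhat) ▷ D.Y ⊗≫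
            E.Y ◁ (D.α ▷ D.Y ⊗≫ D.Y ◁ D.αhat) ⊗≫ 𝟙 _ := by monoidal
        _ = 𝟙 _ ⊗≫ ((λ_ E.Y).hom ≫ (ρ_ E.Y).inv) ▷ D.Y ⊗≫
            E.Y ◁ ((λ_ D.Y).hom ≫ (ρ_ D.Y).inv) ⊗≫ 𝟙 _ := by rw [E.ev_coev'', D.ev_coev'']
        _ = (λ_ (E.Y ⊗ D.Y)).hom ≫ (ρ_ (E.Y ⊗ D.Y)).inv := by monoidal)

@[simp] lemma prodD_Y {X Z : C} (D : LeftDualData X) (E : LeftDualData Z) :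
    (prodD D E).Y = E.Y ⊗ D.Y := rfl
@[simp] lemma prodD_α {X Z : C} (D : LeftDualData X) (E : LeftDualData Z) :
    (prodD D E).α = E.α ⊗≫ E.Y ◁ D.α ▷ Z ⊗≫ 𝟙 ((E.Y ⊗ D.Y) ⊗ (X ⊗ Z)) := rfl
@[simp] lemma prodD_αhat {X Z : C} (D : LeftDualData X) (E : LeftDualData Z) :
    (prodD D E).αhat = 𝟙 ((X ⊗ Z) ⊗ E.Y ⊗ D.Y) ⊗≫ X ◁ E.αhat ▷ D.Y ⊗≫ D.αhat := rfl

end LeftDualData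

set_option maxHeartbeats 3200000 in
lemma tau_prodD {X Z : C} (D : LeftDualData X) (E : LeftDualData Z) :
    trOf (prodD D E) (𝟙 (X ⊗ Z)) = trOf D (𝟙 X) ≫ trOf E (𝟙 Z) := by
  have key : trOf (prodD D E) (𝟙 (X ⊗ Z)) =
      (E.α ≫ (β_ E.Y Z).hom ≫ E.αhat) ≫ (D.α ≫ (β_ D.Y X).hom ≫ D.αhat) := by
    calc trOf (prodD D E) (𝟙 (X ⊗ Z))
        = (E.α ⊗≫ E.Y ◁ D.α ▷ Z ⊗≫ 𝟙 ((E.Y ⊗ D.Y) ⊗ (X ⊗ Z))) ≫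
          (β_ (E.Y ⊗ D.Y) (X ⊗ Z)).hom ≫
          (𝟙 ((X ⊗ Z) ⊗ E.Y ⊗ D.Y) ⊗≫ X ◁ E.αhat ▷ D.Y ⊗≫ D.αhat) := by
            rw [trOf_id]; rfl
      _ = 𝟙 _ ⊗≫ E.α ⊗≫ E.Y ◁ D.α ▷ Z ⊗≫ E.Y ◁ (β_ D.Y X).hom ▷ Z ⊗≫
          (β_ E.Y X).hom ▷ (D.Y ⊗ Z) ⊗≫ (X ⊗ E.Y) ◁ (β_ D.Y Z).hom ⊗≫
          X ◁ (β_ E.Y Z).hom ▷ D.Y ⊗≫ X ◁ E.αhat ▷ D.Y ⊗≫ D.αhat := by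
            rw [BraidedCategory.braiding_tensor_right_hom, BraidedCategory.braiding_tensor_left_hom,
              BraidedCategory.braiding_tensor_left_hom]
            monoidal
      _ = 𝟙 _ ⊗≫ E.α ⊗≫ E.Y ◁ D.α ▷ Z ⊗≫ E.Y ◁ (β_ D.Y X).hom ▷ Z ⊗≫
          ((β_ E.Y X).hom ▷ (D.Y ⊗ Z) ≫ (X ⊗ E.Y) ◁ (β_ D.Y Z).hom) ⊗≫
          X ◁ (β_ E.Y Z).hom ▷ D.Y ⊗≫ X ◁ E.αhat ▷ D.Y ⊗≫ D.αhat := by monoidal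
      _ = 𝟙 _ ⊗≫ E.α ⊗≫ E.Y ◁ D.α ▷ Z ⊗≫ E.Y ◁ (β_ D.Y X).hom ▷ Z ⊗≫
          ((E.Y ⊗ X) ◁ (β_ D.Y Z).hom ≫ (β_ E.Y X).hom ▷ (Z ⊗ D.Y)) ⊗≫
          X ◁ (β_ E.Y Z).hom ▷ D.Y ⊗≫ X ◁ E.αhat ▷ D.Y ⊗≫ D.αhat := by
            rw [← whisker_exchange]
      _ = 𝟙 _ ⊗≫ E.α ⊗≫ E.Y ◁ ((D.α ≫ (β_ D.Y X).hom) ▷ Z) ⊗≫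
          (E.Y ⊗ X) ◁ (β_ D.Y Z).hom ⊗≫ (β_ E.Y X).hom ▷ (Z ⊗ D.Y) ⊗≫
          X ◁ (β_ E.Y Z).hom ▷ D.Y ⊗≫ X ◁ E.αhat ▷ D.Y ⊗≫ D.αhat := by monoidal
      _ = 𝟙 _ ⊗≫ E.α ⊗≫ E.Y ◁ ((D.α ≫ (β_ D.Y X).hom) ▷ Z) ⊗≫
          (E.Y ⊗ X) ◁ (β_ D.Y Z).hom ⊗≫ E.Y ◁ ((β_ X Z).hom ≫ (β_ Z X).hom) ▷ D.Y ⊗≫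
          (β_ E.Y X).hom ▷ (Z ⊗ D.Y) ⊗≫
          X ◁ (β_ E.Y Z).hom ▷ D.Y ⊗≫ X ◁ E.αhat ▷ D.Y ⊗≫ D.αhat := by
            rw [SymmetricCategory.symmetry]; monoidal
      _ = 𝟙 _ ⊗≫ E.α ⊗≫
          E.Y ◁ ((D.α ≫ (β_ D.Y X).hom) ▷ Z ≫ (β_ (X ⊗ D.Y) Z).hom) ⊗≫
          E.Y ◁ (β_ Z X).hom ▷ D.Y ⊗≫ (β_ E.Y X).hom ▷ (Z ⊗ D.Y) ⊗≫
          X ◁ (β_ E.Y Z).hom ▷ D.Y ⊗≫ X ◁ E.αhat ▷ D.Y ⊗≫ D.αhat := by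
            rw [BraidedCategory.braiding_tensor_left_hom]; monoidal
      _ = 𝟙 _ ⊗≫ E.α ⊗≫ E.Y ◁ Z ◁ (D.α ≫ (β_ D.Y X).hom) ⊗≫
          E.Y ◁ (β_ Z X).hom ▷ D.Y ⊗≫ (β_ E.Y X).hom ▷ (Z ⊗ D.Y) ⊗≫
          X ◁ (β_ E.Y Z).hom ▷ D.Y ⊗≫ X ◁ E.αhat ▷ D.Y ⊗≫ D.αhat := by
            rw [BraidedCategory.braiding_naturality_left, braiding_tensorUnit_left]; monoidal
      _ = 𝟙 _ ⊗≫ E.α ⊗≫ E.Y ◁ Z ◁ (D.α ≫ (β_ D.Y X).hom) ⊗≫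
          ((β_ (E.Y ⊗ Z) X).hom ≫ X ◁ ((β_ E.Y Z).hom ≫ E.αhat)) ▷ D.Y ⊗≫ D.αhat := by
            rw [BraidedCategory.braiding_tensor_left_hom]; monoidal
      _ = 𝟙 _ ⊗≫ E.α ⊗≫
          ((E.Y ⊗ Z) ◁ (D.α ≫ (β_ D.Y X).hom) ≫
            ((β_ E.Y Z).hom ≫ E.αhat) ▷ (X ⊗ D.Y)) ⊗≫ D.αhat := by
            rw [← BraidedCategory.braiding_naturality_left, braiding_tensorUnit_left]; monoidal
      _ = 𝟙 _ ⊗≫ E.α ⊗≫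
          (((β_ E.Y Z).hom ≫ E.αhat) ▷ 𝟙_ C ≫ 𝟙_ C ◁ (D.α ≫ (β_ D.Y X).hom)) ⊗≫
          D.αhat := by rw [whisker_exchange]
      _ = (E.α ≫ (β_ E.Y Z).hom ≫ E.αhat) ≫ (D.α ≫ (β_ D.Y X).hom ≫ D.αhat) := by
            rw [MonoidalCategory.whiskerRight_id, id_whiskerLeft]; monoidal
  rw [key, ← trOf_id, ← trOf_id]
  exact scalar_comm _ _

/-- The assignment `X ↦ τ_X := tr(id_X)` descends to a group homomorphism
`Pic(C) → Aut(S)` landing in the `2`-torsion: for invertible `X`, `Z` (with chosen left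
duals whose coevaluations are isomorphisms) one has `τ_{X⊗Z} = τ_X ∘ τ_Z`, each
`τ_X` squares to the identity, and `τ_X` only depends on the isomorphism class of `X`. -/
theorem tau_pic_hom {X Z : C} (DX : LeftDualData X) (DZ : LeftDualData Z)
    (DXZ : LeftDualData (X ⊗ Z)) (hX : IsIso DX.α) (hZ : IsIso DZ.α) :
    (trOf DXZ (𝟙 (X ⊗ Z)) = trOf DX (𝟙 X) ≫ trOf DZ (𝟙 Z)) ∧
    (trOf DX (𝟙 X) ≫ trOf DX (𝟙 X) = 𝟙 (𝟙_ C)) ∧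
    (∀ (X' : C) (DX' : LeftDualData X'), (X ≅ X') → trOf DX (𝟙 X) = trOf DX' (𝟙 X')) := by
  refine ⟨?_, ?_, ?_⟩
  · rw [tau_unique DXZ (prodD DX DZ), tau_prodD]
  · -- X ⊗ DX.Y ≅ 𝟙_ C
    have i : X ⊗ DX.Y ≅ 𝟙_ C :=
      (β_ X DX.Y) ≪≫ (asIso DX.α).symm
    calc trOf DX (𝟙 X) ≫ trOf DX (𝟙 X)
        = trOf DX (𝟙 X) ≫ trOf (swapD DX) (𝟙 DX.Y) := by rw [tau_swapD]
      _ = trOf (prodD DX (swapD DX)) (𝟙 (X ⊗ DX.Y)) := (tau_prodD _ _).symm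
      _ = trOf (congD unitD i) (𝟙 (X ⊗ DX.Y)) := tau_unique _ _
      _ = trOf unitD (𝟙 (𝟙_ C)) := tau_congD _ _
      _ = 𝟙 (𝟙_ C) := tau_unitD
  · intro X' DX' φ
    rw [tau_unique DX (congD DX' φ), tau_congD]
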